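/- Fix n ≥ 1 and d ∈ ℕ. For a holomorphic map f : ℂ → ℂⁿ let J_d f : ℂ → (ℂⁿ)^{d+1} be the jet map z ↦ (f(z), f'(z), …, f^{(d)}(z)). Then the set of entire maps f : ℂ → ℂⁿ for which J_d f has dense image in (ℂⁿ)^{d+1} is dense in the space of all entire maps ℂ → ℂⁿ with the topology of locally uniform convergence; concretely: for every entire f : ℂ → ℂⁿ, every R > 0 and every ε > 0 there exists an entire map φ : ℂ → ℂⁿ such that ‖φ(z) − f(z)‖ < ε for all |z| ≤ R and the closure of the image of z ↦ (φ(z), φ'(z), …, φ^{(d)}(z)) is all of (ℂⁿ)^{d+1}. -/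

import Mathlib

open Metric Set Complex

section aux

set_option linter.unusedSectionVars false

variable {E : Type*} [NormedAddCommGroup E] [NormedSpace ℂ E] [CompleteSpace E]
lemma entire_deriv {u : ℂ → E} (h : Differentiable ℂ u) : Differentiable ℂ (deriv u) := by
  have := (h.contDiff (n := (2:ℕ))).differentiable_iteratedDeriv 1 (by norm_num)
  rwa [iteratedDeriv_one] at this

lemma iteratedDeriv_add_entire {u v : ℂ → E} (hu : Differentiable ℂ u) (hv : Differentiable ℂ v)
    (k : ℕ) (x : ℂ) :
    iteratedDeriv k (u + v) x = iteratedDeriv k u x + iteratedDeriv k v x := by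
  rw [← iteratedDerivWithin_univ, ← iteratedDerivWithin_univ, ← iteratedDerivWithin_univ]
  exact iteratedDerivWithin_add (mem_univ x) uniqueDiffOn_univ
    hu.contDiff.contDiffWithinAt hv.contDiff.contDiffWithinAt

lemma iteratedDeriv_add_entire' {u v : ℂ → E} (hu : Differentiable ℂ u) (hv : Differentiable ℂ v)
    (k : ℕ) (x : ℂ) :
    iteratedDeriv k (fun z => u z + v z) x = iteratedDeriv k u x + iteratedDeriv k v x :=
  iteratedDeriv_add_entire hu hv k x

lemma iteratedDeriv_zero_fun (k : ℕ) (x : ℂ) :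
    iteratedDeriv k (fun _ : ℂ => (0 : E)) x = 0 := by
  induction k generalizing x with
  | zero => simp
  | succ k ih =>
    rw [iteratedDeriv_succ']
    have : deriv (fun _ : ℂ => (0 : E)) = fun _ : ℂ => (0 : E) := by
      funext z; simp
    rw [this]; exact ih x

lemma iteratedDeriv_smul_const_entire {u : ℂ → ℂ} (hu : Differentiable ℂ u) (c : E) (k : ℕ)
    (x : ℂ) :
    iteratedDeriv k (fun z => u z • c) x = iteratedDeriv k u x • c := by
  induction k generalizing u with
  | zero => simp
  | succ k ih =>
    rw [iteratedDeriv_succ', iteratedDeriv_succ']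
    have : deriv (fun z => u z • c) = fun z => deriv u z • c := by
      funext z; exact deriv_smul_const (hu z) c
    rw [this]
    exact ih (entire_deriv hu)

lemma iteratedDeriv_monomial (a : ℂ) :
    ∀ (j k : ℕ), j ≤ k → ∀ (q : ℂ → ℂ), Differentiable ℂ q →
      iteratedDeriv j (fun z => (z - a) ^ k * q z) a
        = if j = k then (k.factorial : ℂ) * q a else 0 := by
  intro j
  induction j with
  | zero =>
    intro k hk q hq
    rw [iteratedDeriv_zero]
    simp only [sub_self]
    rcases Nat.eq_zero_or_pos k with h | h
    · subst h; simp
    · rw [zero_pow (by omega), if_neg (by omega), zero_mul]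
  | succ j ih =>
    intro k hk q hq
    obtain ⟨k', rfl⟩ : ∃ k', k = k' + 1 := ⟨k - 1, by omega⟩
    rw [iteratedDeriv_succ']
    have hq' : Differentiable ℂ (deriv q) := entire_deriv hq
    have hder : deriv (fun z => (z - a) ^ (k' + 1) * q z)
        = fun z => (z - a) ^ k' * (((k' : ℂ) + 1) * q z + (z - a) * deriv q z) := by
      funext z
      have h1 : HasDerivAt (fun z : ℂ => (z - a) ^ (k' + 1))
          ((((k' + 1 : ℕ) : ℂ)) * (z - a) ^ (k' + 1 - 1) * 1) z :=
        ((hasDerivAt_id z).sub_const a).pow _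
      have h2 := h1.mul (hq z).hasDerivAt
      rw [show (fun z => (z - a) ^ (k' + 1) * q z) = (fun z : ℂ => (z - a) ^ (k' + 1)) * q from rfl,
        h2.deriv]
      push_cast
      ring_nf
    rw [hder, ih k' (by omega) _ (by
      exact ((differentiable_const _).mul hq).add ((differentiable_id.sub_const a).mul hq'))]
    by_cases hjk : j = k'
    · subst hjk
      rw [if_pos rfl, if_pos rfl]
      simp only [sub_self, zero_mul, add_zero, Nat.factorial_succ]
      push_cast
      ring
    · rw [if_neg hjk, if_neg (by omega)]

lemma gadget_slot (a : ℂ) (r : ℝ) (hr : 0 < r) (ha : r < ‖a‖) (k : ℕ) (c : E) (η : ℝ)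
    (hη : 0 < η) :
    ∃ g : ℂ → E, Differentiable ℂ g ∧ (∀ z : ℂ, ‖z‖ ≤ r → ‖g z‖ ≤ η) ∧
      (∀ j, j < k → iteratedDeriv j g a = 0) ∧ iteratedDeriv k g a = c := by
  have ha0 : (0:ℝ) < ‖a‖ := hr.trans ha
  have hane : a ≠ 0 := by simpa using norm_pos_iff.1 ha0
  set v : E := ((k.factorial : ℂ))⁻¹ • c with hv
  set ρ : ℝ := r / ‖a‖ with hρ
  have hρ0 : 0 ≤ ρ := by positivity
  have hρ1 : ρ < 1 := (div_lt_one ha0).2 ha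
  set C : ℝ := (r + ‖a‖) ^ k * ‖v‖ + 1 with hC
  have hC0 : 0 < C := by positivity
  obtain ⟨M, hM⟩ : ∃ M : ℕ, ρ ^ M < η / C := exists_pow_lt_of_lt_one (by positivity) hρ1
  have hqdiff : Differentiable ℂ (fun z : ℂ => (z / a) ^ M) :=
    (differentiable_id.div_const a).pow M
  have hudiff : Differentiable ℂ (fun z : ℂ => (z - a) ^ k * (z / a) ^ M) :=
    ((differentiable_id.sub_const a).pow k).mul hqdiff
  refine ⟨fun z => ((z - a) ^ k * (z / a) ^ M) • v, hudiff.smul_const v, ?_, ?_, ?_⟩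
  · intro z hz
    have h1 : ‖((z - a) ^ k * (z / a) ^ M) • v‖ = ‖z - a‖ ^ k * ‖z / a‖ ^ M * ‖v‖ := by
      rw [norm_smul, norm_mul, norm_pow, norm_pow]
    rw [h1]
    have h2 : ‖z - a‖ ≤ r + ‖a‖ := (norm_sub_le z a).trans (by gcongr)
    have h3 : ‖z / a‖ ≤ ρ := by
      rw [norm_div, hρ]
      gcongr
    calc ‖z - a‖ ^ k * ‖z / a‖ ^ M * ‖v‖
        ≤ (r + ‖a‖) ^ k * ρ ^ M * ‖v‖ := by gcongr <;> positivity
      _ = (r + ‖a‖) ^ k * ‖v‖ * ρ ^ M := by ring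
      _ ≤ C * ρ ^ M := mul_le_mul_of_nonneg_right (by rw [hC]; linarith) (by positivity)
      _ ≤ C * (η / C) := by gcongr
      _ = η := by field_simp
  · intro j hj
    rw [iteratedDeriv_smul_const_entire hudiff v j a,
      iteratedDeriv_monomial a j k hj.le _ hqdiff, if_neg (by omega), zero_smul]
  · rw [iteratedDeriv_smul_const_entire hudiff v k a,
      iteratedDeriv_monomial a k k le_rfl _ hqdiff, if_pos rfl]
    rw [div_self hane, one_pow, mul_one, hv, smul_smul,
      mul_inv_cancel₀ (by exact_mod_cast k.factorial_ne_zero), one_smul]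

lemma gadget (d : ℕ) (a : ℂ) (r : ℝ) (hr : 0 < r) (ha : r < ‖a‖) (w : ℕ → E) (η : ℝ)
    (hη : 0 < η) :
    ∃ g : ℂ → E, Differentiable ℂ g ∧ (∀ z : ℂ, ‖z‖ ≤ r → ‖g z‖ ≤ η) ∧
      ∀ k, k ≤ d → iteratedDeriv k g a = w k := by
  suffices H : ∀ (c : ℕ), ∀ (w : ℕ → E), (∀ j, j < d + 1 - c → w j = 0) → ∀ (η : ℝ), 0 < η →
      ∃ g : ℂ → E, Differentiable ℂ g ∧ (∀ z : ℂ, ‖z‖ ≤ r → ‖g z‖ ≤ η) ∧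
        ∀ k, k ≤ d → iteratedDeriv k g a = w k by
    exact H (d + 1) w (fun j hj => absurd hj (by omega)) η hη
  intro c
  induction c with
  | zero =>
    intro w hw η hη
    refine ⟨fun _ => 0, differentiable_const 0, by simp [hη.le], fun k hk => ?_⟩
    rw [iteratedDeriv_zero_fun, hw k (by omega)]
  | succ c ih =>
    intro w hw η hη
    set k := d - c with hkdef
    obtain ⟨g₁, hg₁d, hg₁b, hg₁lo, hg₁k⟩ := gadget_slot a r hr ha k (w k) (η / 2) (by positivity)
    set w' : ℕ → E := fun j => w j - iteratedDeriv j g₁ a with hw'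
    have hw'0 : ∀ j, j < d + 1 - c → w' j = 0 := by
      intro j hj
      have hjk : j ≤ k := by omega
      show w j - iteratedDeriv j g₁ a = 0
      rcases lt_or_eq_of_le hjk with h | h
      · rw [hw j (by omega), hg₁lo j h, sub_zero]
      · subst h; rw [hg₁k, sub_self]
    obtain ⟨g₂, hg₂d, hg₂b, hg₂j⟩ := ih w' hw'0 (η / 2) (by positivity)
    refine ⟨g₁ + g₂, hg₁d.add hg₂d, ?_, ?_⟩
    · intro z hz
      calc ‖(g₁ + g₂) z‖ ≤ ‖g₁ z‖ + ‖g₂ z‖ := norm_add_le _ _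
        _ ≤ η / 2 + η / 2 := add_le_add (hg₁b z hz) (hg₂b z hz)
        _ = η := by ring
    · intro j hj
      rw [iteratedDeriv_add_entire hg₁d hg₂d, hg₂j j hj]
      show iteratedDeriv j g₁ a + (w j - iteratedDeriv j g₁ a) = w j
      abel

lemma cauchy_bound {h : ℂ → E} (hd : Differentiable ℂ h) (c : ℂ) {C : ℝ}
    (hC : ∀ z ∈ closedBall c 1, ‖h z‖ ≤ C) (k : ℕ) :
    ‖iteratedDeriv k h c‖ ≤ k.factorial * C := by
  have hC0 : 0 ≤ C := le_trans (norm_nonneg _) (hC c (mem_closedBall_self zero_le_one))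
  have hp : HasFPowerSeriesOnBall h (cauchyPowerSeries h c 1) c ⊤ :=
    hd.hasFPowerSeriesOnBall c (R := 1) one_pos
  have h1 : iteratedDeriv k h c = iteratedFDeriv ℂ k h c (fun _ => 1) :=
    iteratedDeriv_eq_iteratedFDeriv
  have h2 := hp.factorial_smul (y := (1:ℂ)) k
  rw [h1, ← h2]
  have h3 : ‖k.factorial • (cauchyPowerSeries h c 1 k) (fun _ => (1:ℂ))‖
      ≤ (k.factorial : ℝ) * ‖(cauchyPowerSeries h c 1 k) (fun _ => (1:ℂ))‖ :=
    norm_nsmul_le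
  refine h3.trans ?_
  have h4 : ‖(cauchyPowerSeries h c 1 k) (fun _ => (1:ℂ))‖ ≤ ‖cauchyPowerSeries h c 1 k‖ := by
    have := (cauchyPowerSeries h c 1 k).le_opNorm (fun _ => (1:ℂ))
    simpa using this
  have h5 : ‖cauchyPowerSeries h c 1 k‖ ≤
      ((2 * Real.pi)⁻¹ * ∫ θ : ℝ in (0)..2 * Real.pi, ‖h (circleMap c 1 θ)‖) := by
    have := norm_cauchyPowerSeries_le h c 1 k
    simpa using this
  have h6 : (∫ θ : ℝ in (0)..2 * Real.pi, ‖h (circleMap c 1 θ)‖) ≤ 2 * Real.pi * C := by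
    have hint : IntervalIntegrable (fun θ : ℝ => ‖h (circleMap c 1 θ)‖) MeasureTheory.volume
        0 (2 * Real.pi) :=
      ((hd.continuous.comp (continuous_circleMap c 1)).norm).intervalIntegrable _ _
    calc (∫ θ : ℝ in (0)..2 * Real.pi, ‖h (circleMap c 1 θ)‖)
        ≤ ∫ _ : ℝ in (0)..2 * Real.pi, C := by
          apply intervalIntegral.integral_mono_on (by positivity) hint
            intervalIntegrable_const
          intro θ _
          exact hC _ (circleMap_mem_closedBall c zero_le_one θ)
      _ = 2 * Real.pi * C := by simp [mul_comm]
  calc (k.factorial : ℝ) * ‖(cauchyPowerSeries h c 1 k) (fun _ => (1:ℂ))‖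
      ≤ (k.factorial : ℝ) * ((2 * Real.pi)⁻¹ * (2 * Real.pi * C)) := by
        apply mul_le_mul_of_nonneg_left _ (by positivity)
        refine (h4.trans h5).trans ?_
        apply mul_le_mul_of_nonneg_left h6 (by positivity)
    _ = (k.factorial : ℝ) * C := by
        field_simp

lemma geom_summable (c : ℝ) (N : ℕ) : Summable (fun j : ℕ => c / 2 ^ (j + N)) := by
  have h1 : (fun j : ℕ => c / 2 ^ (j + N)) = fun j : ℕ => (c / 2 ^ N) * (1 / 2) ^ j := by
    funext j; rw [pow_add]; field_simp; rw [mul_assoc, ← mul_pow]; norm_num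
  rw [h1]
  exact summable_geometric_two.mul_left _

lemma geom_tsum (c : ℝ) (N : ℕ) : ∑' j : ℕ, c / 2 ^ (j + N) = 2 * c / 2 ^ N := by
  have h1 : (fun j : ℕ => c / 2 ^ (j + N)) = fun j : ℕ => (c / 2 ^ N) * (1 / 2) ^ j := by
    funext j; rw [pow_add]; field_simp; rw [mul_assoc, ← mul_pow]; norm_num
  rw [h1, tsum_mul_left, tsum_geometric_two]
  ring

lemma sum_entire {g : ℕ → ℂ → E} (hgd : ∀ j, Differentiable ℂ (g j)) {δ : ℕ → ℝ}
    (hδ : Summable δ) {r : ℕ → ℝ} (hgb : ∀ j (z : ℂ), ‖z‖ ≤ r j → ‖g j z‖ ≤ δ j)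
    (hr : ∀ ρ : ℝ, ∃ J, ∀ j, J ≤ j → ρ ≤ r j) :
    Differentiable ℂ (fun z => ∑' j, g j z) ∧ ∀ z : ℂ, Summable (fun j => ‖g j z‖) := by
  have key : ∀ ρ : ℝ, 0 < ρ → ∃ u : ℕ → ℝ, Summable u ∧
      ∀ j, ∀ z ∈ closedBall (0:ℂ) ρ, ‖g j z‖ ≤ u j := by
    intro ρ hρ
    obtain ⟨J, hJ⟩ := hr ρ
    have hb : ∀ j, ∃ Cj : ℝ, (∀ z ∈ closedBall (0:ℂ) ρ, ‖g j z‖ ≤ Cj) ∧ (J ≤ j → Cj = δ j) := by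
      intro j
      by_cases hj : J ≤ j
      · refine ⟨δ j, fun z hz => hgb j z ?_, fun _ => rfl⟩
        rw [mem_closedBall, dist_zero_right] at hz
        exact hz.trans (hJ j hj)
      · obtain ⟨Cj, hCj⟩ := (isCompact_closedBall (0:ℂ) ρ).exists_bound_of_continuousOn
          ((hgd j).continuous.continuousOn)
        exact ⟨Cj, hCj, fun h => absurd h hj⟩
    choose u hu1 hu2 using hb
    refine ⟨u, ?_, hu1⟩
    apply (summable_nat_add_iff J).1
    have he : (fun j => u (j + J)) = fun j => δ (j + J) :=
      funext fun j => hu2 _ (Nat.le_add_left J j)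
    rw [he]
    exact (summable_nat_add_iff J).2 hδ
  constructor
  · intro z
    obtain ⟨u, hu, hub⟩ := key (‖z‖ + 1) (by positivity)
    have hdo := differentiableOn_tsum_of_summable_norm hu
      (fun j => (hgd j).differentiableOn)
      (isOpen_ball : IsOpen (ball (0:ℂ) (‖z‖ + 1)))
      (fun j w hw => hub j w (ball_subset_closedBall hw))
    exact hdo.differentiableAt (isOpen_ball.mem_nhds (by
      rw [mem_ball, dist_zero_right]; linarith))
  · intro z
    obtain ⟨u, hu, hub⟩ := key (‖z‖ + 1) (by positivity)
    refine Summable.of_nonneg_of_le (fun j => norm_nonneg _) (fun j => hub j z ?_) hu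
    rw [mem_closedBall, dist_zero_right]; linarith

end aux

set_option maxHeartbeats 2000000 in
/-- Entire maps `ℂ → ℂⁿ` whose `d`-jet `z ↦ (f(z), f'(z), …, f^{(d)}(z))` has dense image
in `(ℂⁿ)^{d+1}` are dense among all entire maps `ℂ → ℂⁿ` for the topology of locally
uniform convergence. -/
theorem dense_entire_maps_with_dense_jet {n : ℕ} (hn : 1 ≤ n) (d : ℕ)
    (f : ℂ → Fin n → ℂ) (hf : Differentiable ℂ f) (R ε : ℝ) (hR : 0 < R) (hε : 0 < ε) :
    ∃ φ : ℂ → Fin n → ℂ, Differentiable ℂ φ ∧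
      (∀ z : ℂ, ‖z‖ ≤ R → ‖φ z - f z‖ < ε) ∧
      Dense (Set.range fun z : ℂ => fun k : Fin (d + 1) => iteratedDeriv k.1 φ z) := by
  classical
  set B : ℝ := R + 2 with hBdef
  have hB2 : (2:ℝ) ≤ B := by simp only [hBdef]; linarith
  have hB0 : (0:ℝ) < B := by linarith
  set rr : ℕ → ℝ := fun m => 4 ^ m * B / 2 with hrrdef
  set aa : ℕ → ℂ := fun m => ((4 ^ m * B : ℝ) : ℂ) with haadef
  have hpow1 : ∀ m : ℕ, (1:ℝ) ≤ 4 ^ m := fun m => one_le_pow₀ (by norm_num)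
  have hnorm_aa : ∀ m, ‖aa m‖ = 4 ^ m * B := by
    intro m
    rw [haadef]
    simp only [Complex.norm_real]
    exact abs_of_pos (by positivity)
  have hr_pos : ∀ m, 0 < rr m := by
    intro m; rw [hrrdef]; positivity
  have hr_lt : ∀ m, rr m < ‖aa m‖ := by
    intro m
    rw [hnorm_aa m, hrrdef]
    have h1 : (0:ℝ) < 4 ^ m * B := by positivity
    simp only []
    nlinarith [h1]
  have hr_R : ∀ m, 1 ≤ m → R ≤ rr m := by
    intro m hm
    have h4 : (4:ℝ) ≤ 4 ^ m := by
      calc (4:ℝ) = 4 ^ 1 := (pow_one 4).symm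
        _ ≤ 4 ^ m := by
            apply pow_le_pow_right₀ (by norm_num) hm
    rw [hrrdef]
    simp only [hBdef]
    nlinarith
  have hr_mono : Monotone rr := by
    intro i j hij
    rw [hrrdef]
    simp only []
    have h1 : (4:ℝ) ^ i ≤ 4 ^ j := by
      apply pow_le_pow_right₀ (by norm_num) hij
    nlinarith
  have hr_unb : ∀ ρ : ℝ, ∃ J, ∀ j, J ≤ j → ρ ≤ rr j := by
    intro ρ
    obtain ⟨J, hJ⟩ := pow_unbounded_of_one_lt ρ (show (1:ℝ) < 4 by norm_num)
    refine ⟨J, fun j hj => ?_⟩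
    have h1 : (4:ℝ) ^ J ≤ 4 ^ j := by
      apply pow_le_pow_right₀ (by norm_num) hj
    have h2 : (4:ℝ) ^ j ≤ rr j := by
      rw [hrrdef]; simp only []; nlinarith [hpow1 j]
    linarith
  have h_ball : ∀ m j, m < j → ∀ z ∈ closedBall (aa m) 1, ‖z‖ ≤ rr j := by
    intro m j hmj z hz
    have h1 : ‖z‖ ≤ ‖aa m‖ + 1 := by
      have h2 : dist z (aa m) ≤ 1 := mem_closedBall.1 hz
      rw [dist_eq_norm] at h2
      calc ‖z‖ = ‖(z - aa m) + aa m‖ := by ring_nf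
        _ ≤ ‖z - aa m‖ + ‖aa m‖ := norm_add_le _ _
        _ ≤ ‖aa m‖ + 1 := by linarith
    have h3 : ‖aa m‖ + 1 ≤ rr (m + 1) := by
      rw [hnorm_aa m, hrrdef]
      simp only []
      have h4 : (1:ℝ) ≤ 4 ^ m * B := by nlinarith [hpow1 m]
      have h5 : (4:ℝ) ^ (m+1) = 4 * 4 ^ m := by ring
      rw [h5]
      nlinarith
    have h6 : rr (m + 1) ≤ rr j := hr_mono hmj
    linarith
  set δ : ℕ → ℝ := fun m => ε / 2 ^ (m + 1) with hδdef
  have hδpos : ∀ m, 0 < δ m := by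
    intro m; rw [hδdef]; positivity
  have hδsum : Summable δ := by
    rw [hδdef]; exact geom_summable ε 1
  obtain ⟨e, he⟩ := TopologicalSpace.exists_dense_seq (Fin (d + 1) → Fin n → ℂ)
  set V : ℕ → ℕ → (Fin n → ℂ) :=
    fun m k => if hk : k < d + 1 then e (Nat.unpair m).1 ⟨k, hk⟩ else 0 with hVdef
  have hgad : ∀ (S : ℂ → Fin n → ℂ) (m : ℕ), ∃ g : ℂ → Fin n → ℂ, Differentiable ℂ g ∧
      (∀ z : ℂ, ‖z‖ ≤ rr m → ‖g z‖ ≤ δ m) ∧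
      ∀ k, k ≤ d → iteratedDeriv k g (aa m) = V m k - iteratedDeriv k S (aa m) :=
    fun S m => gadget d (aa m) (rr m) (hr_pos m) (hr_lt m)
      (fun k => V m k - iteratedDeriv k S (aa m)) (δ m) (hδpos m)
  set σ : ℕ → ℂ → Fin n → ℂ :=
    fun m => Nat.rec (motive := fun _ => ℂ → Fin n → ℂ) f
      (fun m' S => S + Classical.choose (hgad S (m' + 1))) m with hσdef
  set g : ℕ → ℂ → Fin n → ℂ :=
    fun m => Nat.casesOn (motive := fun _ => ℂ → Fin n → ℂ) m (fun _ => 0)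
      (fun m' => Classical.choose (hgad (σ m') (m' + 1))) with hgdef
  have hσ0 : σ 0 = f := by rw [hσdef]; rfl
  have hg0 : ∀ z : ℂ, g 0 z = 0 := by intro z; rw [hgdef]; rfl
  have hgeq : ∀ m, g (m + 1) = Classical.choose (hgad (σ m) (m + 1)) := by
    intro m; rw [hgdef]
  have hσs : ∀ m, σ (m + 1) = σ m + g (m + 1) := by
    intro m; rw [hσdef, hgdef]
  have hgspec : ∀ m, Differentiable ℂ (g (m + 1)) ∧
      (∀ z : ℂ, ‖z‖ ≤ rr (m + 1) → ‖g (m + 1) z‖ ≤ δ (m + 1)) ∧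
      ∀ k, k ≤ d → iteratedDeriv k (g (m + 1)) (aa (m + 1))
        = V (m + 1) k - iteratedDeriv k (σ m) (aa (m + 1)) := by
    intro m
    rw [hgeq m]
    exact Classical.choose_spec (hgad (σ m) (m + 1))
  clear_value σ g
  clear hσdef hgdef
  have hσd : ∀ m, Differentiable ℂ (σ m) := by
    intro m; induction m with
    | zero => rw [hσ0]; exact hf
    | succ m ih => rw [hσs m]; exact ih.add (hgspec m).1
  have hgd : ∀ m, Differentiable ℂ (g m) := by
    intro m; cases m with
    | zero =>
      have : g 0 = fun _ => 0 := funext hg0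
      rw [this]; exact differentiable_const 0
    | succ m => exact (hgspec m).1
  have hgb : ∀ m (z : ℂ), ‖z‖ ≤ rr m → ‖g m z‖ ≤ δ m := by
    intro m z hz; cases m with
    | zero => rw [hg0 z]; simpa using (hδpos 0).le
    | succ m => exact (hgspec m).2.1 z hz
  have hjets : ∀ m, ∀ k, k ≤ d → iteratedDeriv k (σ (m + 1)) (aa (m + 1)) = V (m + 1) k := by
    intro m k hk
    rw [hσs m, iteratedDeriv_add_entire (hσd m) (hgd (m + 1)), (hgspec m).2.2 k hk]
    abel
  obtain ⟨hTd, hTs⟩ := sum_entire hgd hδsum hgb hr_unb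
  have hsumv : ∀ z : ℂ, Summable (fun j => g j z) := fun z => (hTs z).of_norm
  set φ : ℂ → Fin n → ℂ := fun z => f z + ∑' j, g j z with hφdef
  have hφd : Differentiable ℂ φ := by
    rw [hφdef]; exact hf.add hTd
  have hσsum : ∀ m (z : ℂ), σ m z = f z + ∑ j ∈ Finset.range (m + 1), g j z := by
    intro m z; induction m with
    | zero =>
      rw [hσ0, Finset.sum_range_one, hg0 z, add_zero]
    | succ m ih =>
      rw [hσs m, Pi.add_apply, ih]
      conv_rhs => rw [Finset.sum_range_succ]
      rw [add_assoc]
  have happrox : ∀ z : ℂ, ‖z‖ ≤ R → ‖φ z - f z‖ < ε := by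
    intro z hz
    have h1 : φ z - f z = ∑' j, g j z := by
      rw [hφdef]
      exact add_sub_cancel_left (f z) _
    rw [h1]
    set b : ℕ → ℝ := fun j => if j = 0 then 0 else δ j with hbdef
    have hble : ∀ j, b j ≤ δ j := by
      intro j; rw [hbdef]
      by_cases hj : j = 0
      · simp only [if_pos hj]; exact (hδpos j).le
      · simp only [if_neg hj]; exact le_rfl
    have hbnn : ∀ j, 0 ≤ b j := by
      intro j; rw [hbdef]
      by_cases hj : j = 0
      · simp [hj]
      · simp only [if_neg hj]; exact (hδpos j).le
    have hbsum : Summable b := Summable.of_nonneg_of_le hbnn hble hδsum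
    have hb : ∀ j, ‖g j z‖ ≤ b j := by
      intro j; cases j with
      | zero => rw [hg0 z, hbdef]; simp
      | succ j =>
        have h2 : ‖g (j+1) z‖ ≤ δ (j+1) := hgb (j+1) z (hz.trans (hr_R (j+1) (by omega)))
        rw [hbdef]; simpa using h2
    have h3 : ‖∑' j, g j z‖ ≤ ∑' j, b j := by
      calc ‖∑' j, g j z‖ ≤ ∑' j, ‖g j z‖ := norm_tsum_le_tsum_norm (hTs z)
        _ ≤ ∑' j, b j := (hTs z).tsum_le_tsum hb hbsum
    have h4 : ∑' j, b j = ε / 2 := by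
      rw [hbsum.tsum_eq_zero_add]
      have h5 : b 0 = 0 := by rw [hbdef]; simp
      have h6 : (fun j : ℕ => b (j + 1)) = fun j : ℕ => ε / 2 ^ (j + 2) := by
        funext j
        simp only [hbdef, hδdef]
        rw [if_neg (Nat.succ_ne_zero j)]
      rw [h5, h6, zero_add, geom_tsum]
      ring
    rw [h4] at h3
    linarith
  have htail : ∀ m, ∀ z ∈ closedBall (aa m) 1, ‖φ z - σ m z‖ ≤ ε / 2 ^ (m + 1) := by
    intro m z hz
    have h2 := Summable.sum_add_tsum_nat_add (f := fun j => g j z) (m + 1) (hsumv z)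
    have h1 : φ z - σ m z = ∑' j, g (j + (m + 1)) z := by
      rw [hφdef, hσsum m z]
      show (f z + ∑' j, g j z) - (f z + ∑ j ∈ Finset.range (m + 1), g j z) = _
      rw [add_sub_add_left_eq_sub, ← h2, add_sub_cancel_left]
    rw [h1]
    have hnorms : Summable (fun j => ‖g (j + (m + 1)) z‖) :=
      (summable_nat_add_iff (m + 1)).2 (hTs z)
    have hδnorms : Summable (fun j : ℕ => δ (j + (m + 1))) :=
      (summable_nat_add_iff (m + 1)).2 hδsum
    calc ‖∑' j, g (j + (m + 1)) z‖ ≤ ∑' j, ‖g (j + (m + 1)) z‖ := norm_tsum_le_tsum_norm hnorms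
      _ ≤ ∑' j, δ (j + (m + 1)) := by
          apply hnorms.tsum_le_tsum _ hδnorms
          intro j
          exact hgb (j + (m + 1)) z (h_ball m (j + (m + 1)) (by omega) z hz)
      _ = ε / 2 ^ (m + 1) := by
          have h3 : (fun j : ℕ => δ (j + (m + 1))) = fun j : ℕ => ε / 2 ^ (j + (m + 2)) := by
            funext j; rw [hδdef]; ring_nf
          rw [h3, geom_tsum]
          field_simp
          ring
  have hjφ : ∀ m k, k ≤ d → ‖iteratedDeriv k φ (aa (m + 1)) - V (m + 1) k‖
      ≤ (d.factorial : ℝ) * (ε / 2 ^ (m + 2)) := by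
    intro m k hk
    have htd : Differentiable ℂ (fun z => φ z - σ (m + 1) z) := hφd.sub (hσd (m + 1))
    have hφeq : φ = σ (m + 1) + fun z => φ z - σ (m + 1) z := by
      funext z; rw [Pi.add_apply]; abel
    have h1 : iteratedDeriv k φ (aa (m + 1))
        = iteratedDeriv k (σ (m + 1)) (aa (m + 1))
          + iteratedDeriv k (fun z => φ z - σ (m + 1) z) (aa (m + 1)) := by
      conv_lhs => rw [hφeq]
      exact iteratedDeriv_add_entire (hσd (m + 1)) htd k _
    rw [h1, hjets m k hk, add_sub_cancel_left]
    have hcb := cauchy_bound htd (aa (m + 1)) (C := ε / 2 ^ (m + 2))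
      (fun z hz => by
        have := htail (m + 1) z hz
        simpa using this) k
    refine hcb.trans ?_
    apply mul_le_mul_of_nonneg_right _ (by positivity)
    exact_mod_cast Nat.cast_le.2 (Nat.factorial_le hk)
  refine ⟨φ, hφd, happrox, ?_⟩
  have hdr : DenseRange (fun z : ℂ => fun k : Fin (d + 1) => iteratedDeriv k.1 φ z) := by
    rw [Metric.denseRange_iff]
    intro x ρ hρ
    obtain ⟨k₀, hk₀⟩ := Metric.denseRange_iff.1 he x (ρ / 2) (by positivity)
    obtain ⟨L, hL⟩ := pow_unbounded_of_one_lt ((d.factorial : ℝ) * ε * 2 / ρ)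
      (show (1:ℝ) < 2 by norm_num)
    obtain ⟨m', hmeq⟩ : ∃ m', Nat.pair k₀ (L + 1) = m' + 1 := by
      have h1 : 1 ≤ Nat.pair k₀ (L + 1) :=
        le_trans (by omega) (Nat.right_le_pair k₀ (L + 1))
      exact ⟨Nat.pair k₀ (L + 1) - 1, by omega⟩
    have hLm : L ≤ m' := by
      have := Nat.right_le_pair k₀ (L + 1)
      omega
    have hVm : ∀ k : Fin (d + 1), V (m' + 1) k.1 = e k₀ k := by
      intro k
      rw [hVdef]
      simp only []
      rw [dif_pos k.isLt, ← hmeq, Nat.unpair_pair]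
    have hexp : (d.factorial : ℝ) * (ε / 2 ^ (m' + 2)) < ρ / 2 := by
      have h2 : (d.factorial : ℝ) * ε * 2 < 2 ^ L * ρ := (div_lt_iff₀ hρ).1 hL
      have h1 : (2:ℝ) ^ L ≤ 2 ^ (m' + 2) := by
        apply pow_le_pow_right₀ one_le_two (by omega)
      have key : (d.factorial : ℝ) * ε * 2 < 2 ^ (m' + 2) * ρ := by
        have h4 : (2:ℝ) ^ L * ρ ≤ 2 ^ (m' + 2) * ρ :=
          mul_le_mul_of_nonneg_right h1 hρ.le
        linarith
      have h3 : (d.factorial : ℝ) * (ε / 2 ^ (m' + 2))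
          = ((d.factorial : ℝ) * ε * 2) / (2 ^ (m' + 2) * 2) := by
        field_simp
      rw [h3, div_lt_div_iff₀ (by positivity) (by norm_num : (0:ℝ) < 2)]
      nlinarith [key]
    refine ⟨aa (m' + 1), ?_⟩
    have hd2 : dist (e k₀) (fun k : Fin (d + 1) => iteratedDeriv k.1 φ (aa (m' + 1))) < ρ / 2 := by
      rw [dist_pi_lt_iff (by positivity)]
      intro i
      rw [dist_comm, dist_eq_norm]
      calc ‖iteratedDeriv i.1 φ (aa (m' + 1)) - e k₀ i‖
          = ‖iteratedDeriv i.1 φ (aa (m' + 1)) - V (m' + 1) i.1‖ := by rw [hVm i]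
        _ ≤ (d.factorial : ℝ) * (ε / 2 ^ (m' + 2)) := hjφ m' i.1 (by omega)
        _ < ρ / 2 := hexp
    calc dist x ((fun z : ℂ => fun k : Fin (d + 1) => iteratedDeriv k.1 φ z) (aa (m' + 1)))
        ≤ dist x (e k₀)
          + dist (e k₀) (fun k : Fin (d + 1) => iteratedDeriv k.1 φ (aa (m' + 1))) :=
          dist_triangle _ _ _
      _ < ρ / 2 + ρ / 2 := add_lt_add hk₀ hd2
      _ = ρ := by ring
  exact hdr
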